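/- Let g_0(x,z) = (z²x/(z²+1) − 1)(x² + (z²/(z²+1))x + 1) (that is, g(x,0,z²/(z²+1)) with g(x,u,v) = (u²x+1)(vx−1)(x²+(v−u²)x+1)), let X_0 = {(x,y,z) ∈ ℝ³ : y² + g_0(x,z) = 0}, and let p: X_0 → ℝ be defined by p(x,y,z) = x − z². Then: (a) p is a proper map; (b) p is surjective (indeed p(t, √(t²+1), 0) = t for every t ∈ ℝ); and (c) at every point (x,y,z) ∈ X_0 the total derivative of the map Ψ: ℝ³ → ℝ², Ψ(x,y,z) = (y² + g_0(x,z), x − z²), is surjective. -/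

import Mathlib

noncomputable section

/-- `g₀(x,z) = (z²x/(z²+1) − 1)(x² + (z²/(z²+1))x + 1)`, that is `g(x,0,z²/(z²+1))`
for `g(x,u,v) = (u²x+1)(vx−1)(x²+(v−u²)x+1)`. -/
def g₀ (x z : ℝ) : ℝ :=
  (z ^ 2 * x / (z ^ 2 + 1) - 1) * (x ^ 2 + (z ^ 2 / (z ^ 2 + 1)) * x + 1)

/-- `X₀ = {(x,y,z) ∈ ℝ³ : y² + g₀(x,z) = 0}`. -/
def X₀ : Set (ℝ × ℝ × ℝ) := {w | w.2.1 ^ 2 + g₀ w.1 w.2.2 = 0}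

/-- The map `p : X₀ → ℝ`, `p(x,y,z) = x − z²`. -/
def pMap : ↥X₀ → ℝ := fun w => w.1.1 - w.1.2.2 ^ 2

/-- The map `Ψ : ℝ³ → ℝ²`, `Ψ(x,y,z) = (y² + g₀(x,z), x − z²)`. -/
def Ψ : ℝ × ℝ × ℝ → ℝ × ℝ :=
  fun w => (w.2.1 ^ 2 + g₀ w.1 w.2.2, w.1 - w.2.2 ^ 2)

lemma denom_pos (z : ℝ) : (0:ℝ) < z ^ 2 + 1 := by positivity

lemma P_pos (x z : ℝ) : 0 < x ^ 2 + (z ^ 2 / (z ^ 2 + 1)) * x + 1 := by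
  set v := z ^ 2 / (z ^ 2 + 1) with hv
  have h1 : 0 ≤ v := by positivity
  have h2 : v < 1 := by rw [hv, div_lt_one (denom_pos z)]; linarith
  nlinarith [sq_nonneg (2*x + v)]

lemma constraint {x y z : ℝ} (h : y ^ 2 + g₀ x z = 0) : z ^ 2 * x ≤ z ^ 2 + 1 := by
  have hP := P_pos x z
  have hy : 0 ≤ y ^ 2 := sq_nonneg y
  have hg : g₀ x z ≤ 0 := by linarith
  have h1 : z ^ 2 * x / (z ^ 2 + 1) - 1 ≤ 0 := by
    by_contra hc
    push_neg at hc
    have : 0 < g₀ x z := mul_pos hc hP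
    linarith
  have := (div_le_one (denom_pos z)).mp (by linarith)
  linarith

lemma continuous_g₀ : Continuous (fun w : ℝ × ℝ × ℝ => g₀ w.1 w.2.2) := by
  unfold g₀
  fun_prop (disch := intros; positivity)

lemma X₀_closed : IsClosed X₀ := by
  have : X₀ = (fun w : ℝ × ℝ × ℝ => w.2.1 ^ 2 + g₀ w.1 w.2.2) ⁻¹' {0} := rfl
  rw [this]
  refine IsClosed.preimage ?_ isClosed_singleton
  unfold g₀
  fun_prop (disch := intros; positivity)

lemma pMap_continuous : Continuous pMap := by
  unfold pMap
  fun_prop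

lemma pMap_proper (K : Set ℝ) (hK : IsCompact K) : IsCompact (pMap ⁻¹' K) := by
  obtain ⟨M₀, hM₀⟩ := hK.isBounded.subset_closedBall 0
  set M := max M₀ 0 with hMdef
  have hM0 : 0 ≤ M := le_max_right _ _
  have hMK : ∀ t ∈ K, |t| ≤ M := by
    intro t ht
    have := hM₀ ht
    rw [Metric.mem_closedBall, Real.dist_eq, sub_zero] at this
    exact this.trans (le_max_left _ _)
  -- bounds
  set B : ℝ := 2 * M + 2 with hB
  set Cy : ℝ := Real.sqrt ((1 + B) * (B ^ 2 + B + 1)) with hCy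
  set Cz : ℝ := Real.sqrt (M + 2) with hCz
  have hS : Subtype.val '' (pMap ⁻¹' K) ⊆
      Set.Icc (-B) B ×ˢ Set.Icc (-Cy) Cy ×ˢ Set.Icc (-Cz) Cz := by
    rintro w ⟨⟨⟨x, y, z⟩, hmem⟩, hwK, rfl⟩
    have hmem' : y ^ 2 + g₀ x z = 0 := hmem
    have hcon := constraint hmem'
    have ht : |x - z ^ 2| ≤ M := hMK _ hwK
    have habs := abs_le.mp ht
    obtain ⟨ht1, ht2⟩ := habs
    -- z bound
    have hz2 : z ^ 2 ≤ M + 2 := by nlinarith [sq_nonneg z, sq_nonneg (z^2)]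
    have hzB : |z| ≤ Cz := by
      rw [hCz, ← Real.sqrt_sq_eq_abs]
      exact Real.sqrt_le_sqrt hz2
    -- x bound
    have hxB : |x| ≤ B := by
      rw [abs_le]
      constructor <;> nlinarith [sq_nonneg z]
    have habx := abs_le.mp hxB
    -- y bound
    have hy2 : y ^ 2 ≤ (1 + B) * (B ^ 2 + B + 1) := by
      set v := z ^ 2 / (z ^ 2 + 1) with hv
      have hv0 : 0 ≤ v := by positivity
      have hv1 : v ≤ 1 := by rw [hv, div_le_one (denom_pos z)]; linarith
      have hq : z ^ 2 * x / (z ^ 2 + 1) = v * x := by rw [hv]; ring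
      have heq : y ^ 2 = (1 - v * x) * (x ^ 2 + v * x + 1) := by
        have : g₀ x z = (v * x - 1) * (x ^ 2 + v * x + 1) := by
          rw [g₀, hq, hv]
        nlinarith [hmem', this]
      have hB0 : (0:ℝ) ≤ B := by rw [hB]; linarith
      have hx1 : -B ≤ x := habx.1
      have hx2 : x ≤ B := habx.2
      have hvx1 : v * x ≤ 1 := by
        rw [← hq, div_le_one (denom_pos z)]; linarith
      have h2 : 1 - v * x ≤ 1 + B := by
        nlinarith [mul_nonneg hv0 (by linarith : (0:ℝ) ≤ x + B),
          mul_nonneg (by linarith : (0:ℝ) ≤ 1 - v) hB0]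
      have h3 : x ^ 2 + v * x + 1 ≤ B ^ 2 + B + 1 := by
        nlinarith [mul_nonneg hv0 (by linarith : (0:ℝ) ≤ B - x),
          mul_nonneg (by linarith : (0:ℝ) ≤ 1 - v) hB0, sq_nonneg (B - x), sq_nonneg (B + x)]
      have hPpos : 0 < x ^ 2 + v * x + 1 := by rw [hv]; exact P_pos x z
      rw [heq]
      exact mul_le_mul h2 h3 (le_of_lt hPpos) (by linarith)
    have hyB : |y| ≤ Cy := by
      rw [hCy, ← Real.sqrt_sq_eq_abs]
      exact Real.sqrt_le_sqrt hy2
    refine ⟨abs_le.mp hxB, abs_le.mp hyB, abs_le.mp hzB⟩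
  -- S is closed
  have hSdesc : Subtype.val '' (pMap ⁻¹' K) =
      X₀ ∩ (fun w : ℝ × ℝ × ℝ => w.1 - w.2.2 ^ 2) ⁻¹' K := by
    ext w
    constructor
    · rintro ⟨⟨w', hw'⟩, hwK, rfl⟩
      exact ⟨hw', hwK⟩
    · rintro ⟨hw, hwK⟩
      exact ⟨⟨w, hw⟩, hwK, rfl⟩
  have hSclosed : IsClosed (Subtype.val '' (pMap ⁻¹' K)) := by
    rw [hSdesc]
    exact X₀_closed.inter (IsClosed.preimage (by fun_prop) hK.isClosed)
  have hScompact : IsCompact (Subtype.val '' (pMap ⁻¹' K)) :=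
    IsCompact.of_isClosed_subset
      ((isCompact_Icc.prod (isCompact_Icc.prod isCompact_Icc))) hSclosed hS
  have h2 : pMap ⁻¹' K =
      Subtype.val ⁻¹' (X₀ ∩ (fun w : ℝ × ℝ × ℝ => w.1 - w.2.2 ^ 2) ⁻¹' K) := by
    ext ⟨w, hw⟩
    simp [pMap, hw]
  rw [h2]
  exact (Topology.IsClosedEmbedding.subtypeVal X₀_closed).isCompact_preimage
    (hSdesc ▸ hScompact)

lemma memb (t : ℝ) : ((t, Real.sqrt (t ^ 2 + 1), 0) : ℝ × ℝ × ℝ) ∈ X₀ := by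
  have h : (0:ℝ) ≤ t ^ 2 + 1 := by positivity
  simp only [X₀, Set.mem_setOf_eq, g₀, Real.sq_sqrt h]
  norm_num

def Acoef (x z : ℝ) : ℝ :=
  z ^ 2 / (z ^ 2 + 1) * (x ^ 2 + z ^ 2 / (z ^ 2 + 1) * x + 1) +
    (z ^ 2 * x / (z ^ 2 + 1) - 1) * (2 * x + z ^ 2 / (z ^ 2 + 1))
def Ccoef (x z : ℝ) : ℝ :=
  2 * z * x / (z ^ 2 + 1) ^ 2 * (x ^ 2 + z ^ 2 / (z ^ 2 + 1) * x + 1) +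
    (z ^ 2 * x / (z ^ 2 + 1) - 1) * (2 * z * x / (z ^ 2 + 1) ^ 2)

def π₁ : ℝ × ℝ × ℝ →L[ℝ] ℝ := ContinuousLinearMap.fst ℝ ℝ (ℝ × ℝ)
def π₂ : ℝ × ℝ × ℝ →L[ℝ] ℝ :=
  (ContinuousLinearMap.fst ℝ ℝ ℝ).comp (ContinuousLinearMap.snd ℝ ℝ (ℝ × ℝ))
def π₃ : ℝ × ℝ × ℝ →L[ℝ] ℝ :=
  (ContinuousLinearMap.snd ℝ ℝ ℝ).comp (ContinuousLinearMap.snd ℝ ℝ (ℝ × ℝ))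

def Lmap (x y z : ℝ) : ℝ × ℝ × ℝ →L[ℝ] ℝ × ℝ :=
  (Acoef x z • π₁ + (2 * y) • π₂ + Ccoef x z • π₃).prod (π₁ - (2 * z) • π₃)

@[simp] lemma Lmap_apply (x y z : ℝ) (m : ℝ × ℝ × ℝ) :
    Lmap x y z m = (Acoef x z * m.1 + 2 * y * m.2.1 + Ccoef x z * m.2.2,
      m.1 - 2 * z * m.2.2) := by
  simp [Lmap, π₁, π₂, π₃]

lemma hasFDerivAt_Ψ (x y z : ℝ) : HasFDerivAt Ψ (Lmap x y z) (x, y, z) := by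
  have hx : HasFDerivAt (fun w : ℝ × ℝ × ℝ => w.1) π₁ (x, y, z) := hasFDerivAt_fst
  have hy : HasFDerivAt (fun w : ℝ × ℝ × ℝ => w.2.1) π₂ (x, y, z) :=
    hasFDerivAt_fst.comp _ hasFDerivAt_snd
  have hz : HasFDerivAt (fun w : ℝ × ℝ × ℝ => w.2.2) π₃ (x, y, z) :=
    hasFDerivAt_snd.comp _ hasFDerivAt_snd
  have hz2 := hz.mul hz
  have hden := hz2.add_const 1
  have hdne : ((x, y, z) : ℝ × ℝ × ℝ).2.2 * ((x, y, z) : ℝ × ℝ × ℝ).2.2 + 1 ≠ 0 := by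
    have := denom_pos z; simp only []; nlinarith
  have hnum := (hz2.mul hx)
  have hinv := (hasDerivAt_inv hdne).comp_hasFDerivAt ((x, y, z) : ℝ × ℝ × ℝ) hden
  have hq := hnum.mul hinv
  have hf1 := hq.sub_const 1
  have hv := hz2.mul hinv
  have hf2 := ((hx.mul hx).add (hv.mul hx)).add_const 1
  have hg := hf1.mul hf2
  have hF := (hy.mul hy).add hg
  have hG := hx.sub hz2
  have hΨ := hF.prodMk hG
  have hfun : Ψ = fun w : ℝ × ℝ × ℝ =>
      (w.2.1 * w.2.1 + (w.2.2 * w.2.2 * w.1 * (w.2.2 * w.2.2 + 1)⁻¹ - 1) *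
        (w.1 * w.1 + w.2.2 * w.2.2 * (w.2.2 * w.2.2 + 1)⁻¹ * w.1 + 1),
       w.1 - w.2.2 * w.2.2) := by
    funext w; simp [Ψ, g₀, pow_two, div_eq_mul_inv]
  rw [hfun]
  refine hΨ.congr_fderiv ?_
  refine ContinuousLinearMap.ext fun m => Prod.ext ?_ ?_ <;>
    · simp only [ContinuousLinearMap.add_apply, ContinuousLinearMap.smul_apply,
        ContinuousLinearMap.prod_apply, ContinuousLinearMap.coe_comp',
        ContinuousLinearMap.coe_fst', ContinuousLinearMap.coe_snd',
        ContinuousLinearMap.neg_apply, ContinuousLinearMap.sub_apply, Function.comp,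
        smul_eq_mul, π₁, π₂, π₃, Lmap_apply, Acoef, Ccoef, neg_mul, neg_smul,
        Pi.mul_apply, Pi.add_apply, Pi.sub_apply, Function.comp_apply]
      have h := (denom_pos z).ne'
      have h2 : z * z + 1 ≠ 0 := by nlinarith [denom_pos z]
      field_simp
      ring

lemma Lmap_surj {x y z : ℝ} (h : y ^ 2 + g₀ x z = 0) :
    Function.Surjective (Lmap x y z) := by
  have hP := P_pos x z
  rintro ⟨u₁, u₂⟩
  by_cases hy : y ≠ 0
  · refine ⟨(u₂, (u₁ - Acoef x z * u₂) / (2 * y), 0), ?_⟩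
    simp only [Lmap_apply]
    refine Prod.ext ?_ ?_ <;> simp <;> field_simp <;> ring
  · push_neg at hy
    subst hy
    have hg : g₀ x z = 0 := by simpa using h
    have hf1 : z ^ 2 * x / (z ^ 2 + 1) - 1 = 0 := by
      rcases mul_eq_zero.mp hg with h' | h'
      · exact h'
      · exact absurd h' hP.ne'
    have hzx : z ^ 2 * x = z ^ 2 + 1 := by
      have := (div_eq_one_iff_eq (denom_pos z).ne').mp (by linarith)
      linarith
    have hz0 : z ≠ 0 := by
      rintro rfl; norm_num at hzx
    have hz2 : 0 < z ^ 2 := by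
      rcases lt_or_gt_of_ne hz0 with h' | h' <;> nlinarith
    have hxpos : 0 < x := by nlinarith [denom_pos z]
    have hxval : x = (z ^ 2 + 1) / z ^ 2 := by
      field_simp
      linarith
    subst hxval
    have hD : 2 * z * Acoef ((z ^ 2 + 1) / z ^ 2) z + Ccoef ((z ^ 2 + 1) / z ^ 2) z =
        2 * z / (z ^ 2 + 1) ^ 2 * (z ^ 2 * (z ^ 2 + 1) + (z ^ 2 + 1) / z ^ 2) *
          (((z ^ 2 + 1) / z ^ 2) ^ 2 + z ^ 2 / (z ^ 2 + 1) * ((z ^ 2 + 1) / z ^ 2) + 1) := by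
      unfold Acoef Ccoef
      have h := (denom_pos z).ne'
      field_simp
      ring
    have hDne : 2 * z * Acoef ((z ^ 2 + 1) / z ^ 2) z + Ccoef ((z ^ 2 + 1) / z ^ 2) z ≠ 0 := by
      rw [hD]
      have h1 : 2 * z / (z ^ 2 + 1) ^ 2 ≠ 0 := by
        apply div_ne_zero (by simpa using hz0) (by positivity)
      have h2 : z ^ 2 * (z ^ 2 + 1) + (z ^ 2 + 1) / z ^ 2 ≠ 0 := by positivity
      exact mul_ne_zero (mul_ne_zero h1 h2) hP.ne'
    set A := Acoef ((z ^ 2 + 1) / z ^ 2) z with hA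
    set C := Ccoef ((z ^ 2 + 1) / z ^ 2) z with hC
    refine ⟨(u₂ + 2 * z * ((u₁ - A * u₂) / (2 * z * A + C)), 0,
      (u₁ - A * u₂) / (2 * z * A + C)), ?_⟩
    simp only [Lmap_apply]
    refine Prod.ext ?_ ?_
    · show A * (u₂ + 2 * z * ((u₁ - A * u₂) / (2 * z * A + C))) + 2 * 0 * 0 +
        C * ((u₁ - A * u₂) / (2 * z * A + C)) = u₁
      rw [show A * (u₂ + 2 * z * ((u₁ - A * u₂) / (2 * z * A + C))) + 2 * 0 * 0 +
          C * ((u₁ - A * u₂) / (2 * z * A + C)) =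
          A * u₂ + (2 * z * A + C) * ((u₁ - A * u₂) / (2 * z * A + C)) by ring,
        mul_div_cancel₀ _ hDne]
      ring
    · show u₂ + 2 * z * ((u₁ - A * u₂) / (2 * z * A + C)) -
        2 * z * ((u₁ - A * u₂) / (2 * z * A + C)) = u₂
      ring

/-- From the proof of Claim 2 of Section 5: `p` is a proper surjective submersion on
`X₀`; the surjectivity is witnessed by `p(t, √(t²+1), 0) = t`. -/
theorem pMap_proper_surjective_submersion :
    (Continuous pMap ∧ ∀ K : Set ℝ, IsCompact K → IsCompact (pMap ⁻¹' K)) ∧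
    (Function.Surjective pMap ∧
      ∀ t : ℝ, ∃ hmem : ((t, Real.sqrt (t ^ 2 + 1), 0) : ℝ × ℝ × ℝ) ∈ X₀,
        pMap ⟨(t, Real.sqrt (t ^ 2 + 1), 0), hmem⟩ = t) ∧
    (∀ w ∈ X₀, Function.Surjective (fderiv ℝ Ψ w)) := by
  refine ⟨⟨pMap_continuous, pMap_proper⟩, ⟨?_, ?_⟩, ?_⟩
  · intro t
    exact ⟨⟨(t, Real.sqrt (t ^ 2 + 1), 0), memb t⟩, by simp [pMap]⟩
  · intro t
    exact ⟨memb t, by simp [pMap]⟩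
  · rintro ⟨x, y, z⟩ hw
    rw [(hasFDerivAt_Ψ x y z).fderiv]
    exact Lmap_surj hw
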